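/- Let R be a commutative ring, U(v) = v − 2η, Q, h̃ : ℂ → R with Q(v) invertible, satisfying the N-periodicity Q(Uᴺv) = Q(v), h̃(Uᴺv) = h̃(v), and the T⁽ᴶ⁾Q-formula T⁽ᴶ⁾(v) = Q(U⁻¹v)Q(Uᴶ⁻¹v)·Σ_{k=0}^{J−1} h̃(Uᵏ⁻¹v)^L Q(Uᵏ⁻¹v)⁻¹Q(Uᵏv)⁻¹ for 0 ≤ J ≤ N. Let C : ℂ → ℂ satisfy C∘U = U∘C and let M₀ ∈ R be invertible. If T⁽ᴺ⁾(Uw) = M₀⁻¹·Q(Cw)·Q(w) for all w ∈ ℂ, then for all 0 ≤ J ≤ N and all v ∈ ℂ: T⁽ᴶ⁾(Uv) + T⁽ᴺ⁻ᴶ⁾(U^{J+1}v) = M₀⁻¹·Q(CUᴶv)·Q(v). -/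
import Mathlib


open Finset

lemma eightVertex_aux {R : Type*} [CommRing R] (η : ℂ) (L N : ℕ)
    (Q : ℂ → Rˣ) (htil : ℂ → R) (Tf : ℕ → ℂ → R)
    (hfus : ∀ J : ℕ, J ≤ N → ∀ v : ℂ,
      Tf J v = (Q (v + 2*η) : R) * (Q (v - 2*((J : ℂ) - 1)*η) : R) *
        ∑ k ∈ range J, htil (v - 2*((k : ℂ) - 1)*η) ^ L *
          ((Q (v - 2*((k : ℂ) - 1)*η))⁻¹ : Rˣ) * ((Q (v - 2*(k : ℂ)*η))⁻¹ : Rˣ))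
    (v : ℂ) (J : ℕ) (hJ : J ≤ N) :
    Tf J (v - 2*η) = (Q v : R) * (Q (v - 2*(J:ℂ)*η) : R) *
      ∑ k ∈ range J, htil (v - 2*(k:ℂ)*η) ^ L *
        ((Q (v - 2*(k:ℂ)*η))⁻¹ : Rˣ) * ((Q (v - 2*((k:ℂ)+1)*η))⁻¹ : Rˣ) := by
  rw [hfus J hJ]
  have h1 : v - 2*η + 2*η = v := by ring
  have h2 : v - 2*η - 2*((J:ℂ) - 1)*η = v - 2*(J:ℂ)*η := by ring
  rw [h1, h2]
  refine congrArg _ (Finset.sum_congr rfl fun k _ => ?_)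
  have e1 : v - 2*η - 2*((k:ℂ) - 1)*η = v - 2*(k:ℂ)*η := by ring
  have e2 : v - 2*η - 2*(k:ℂ)*η = v - 2*((k:ℂ)+1)*η := by ring
  rw [e1, e2]

/-- The `N`th `QQ`-relation implies the full family of `QQ`-relations
`T⁽ᴶ⁾(Uv) + T⁽ᴺ⁻ᴶ⁾(U^{J+1}v) = M₀⁻¹ Q(CUᴶv) Q(v)` for `0 ≤ J ≤ N`,
where `U v = v - 2η`. -/
theorem eightVertex_QQN_implies_QQ_family {R : Type*} [CommRing R] (η : ℂ) (L N : ℕ)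
    (hN : 0 < N)
    (Q : ℂ → Rˣ) (htil : ℂ → R) (Tf : ℕ → ℂ → R)
    (hfus : ∀ J : ℕ, J ≤ N → ∀ v : ℂ,
      Tf J v = (Q (v + 2*η) : R) * (Q (v - 2*((J : ℂ) - 1)*η) : R) *
        ∑ k ∈ range J, htil (v - 2*((k : ℂ) - 1)*η) ^ L *
          ((Q (v - 2*((k : ℂ) - 1)*η))⁻¹ : Rˣ) * ((Q (v - 2*(k : ℂ)*η))⁻¹ : Rˣ))
    (hQper : ∀ v : ℂ, Q (v - 2*(N : ℂ)*η) = Q v)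
    (hhper : ∀ v : ℂ, htil (v - 2*(N : ℂ)*η) = htil v)
    (C : ℂ → ℂ) (hC : ∀ v : ℂ, C (v - 2*η) = C v - 2*η)
    (M₀ : Rˣ)
    (hQQN : ∀ w : ℂ, Tf N (w - 2*η) = ((M₀⁻¹ : Rˣ) : R) * (Q (C w) : R) * (Q w : R)) :
    ∀ J : ℕ, J ≤ N → ∀ v : ℂ,
      Tf J (v - 2*η) + Tf (N - J) (v - 2*((J : ℂ) + 1)*η)
        = ((M₀⁻¹ : Rˣ) : R) * (Q (C (v - 2*(J : ℂ)*η)) : R) * (Q v : R) := by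
  intro J hJ v
  set S : ℕ → R := fun m => htil (v - 2*(m:ℂ)*η) ^ L *
      ((Q (v - 2*(m:ℂ)*η))⁻¹ : Rˣ) * ((Q (v - 2*((m:ℂ)+1)*η))⁻¹ : Rˣ) with hS
  -- periodicity of S
  have hSper : ∀ m : ℕ, S (m + N) = S m := by
    intro m
    have e1 : v - 2*((m:ℂ) + (N:ℂ))*η = (v - 2*(m:ℂ)*η) - 2*(N:ℂ)*η := by ring
    have e2 : v - 2*(((m:ℂ) + (N:ℂ)) + 1)*η = (v - 2*((m:ℂ)+1)*η) - 2*(N:ℂ)*η := by ring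
    simp only [hS, Nat.cast_add, e1, e2, hQper, hhper]
  set vJ : ℂ := v - 2*(J:ℂ)*η with hvJ
  -- (A)
  have hA : Tf J (v - 2*η) = (Q v : R) * (Q vJ : R) * ∑ k ∈ range J, S k :=
    eightVertex_aux η L N Q htil Tf hfus v J hJ
  -- (B)
  have hB : Tf (N - J) (v - 2*((J:ℂ)+1)*η)
      = (Q vJ : R) * (Q v : R) * ∑ k ∈ range (N - J), S (J + k) := by
    have e0 : v - 2*((J:ℂ)+1)*η = vJ - 2*η := by rw [hvJ]; ring
    rw [e0, eightVertex_aux η L N Q htil Tf hfus vJ (N - J) (Nat.sub_le N J)]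
    have eNJ : ((N - J : ℕ) : ℂ) = (N : ℂ) - (J : ℂ) := by
      push_cast [Nat.cast_sub hJ]; ring
    have e1 : vJ - 2*((N - J : ℕ) : ℂ)*η = v - 2*(N:ℂ)*η := by
      rw [hvJ, eNJ]; ring
    rw [e1, hQper]
    refine congrArg _ (Finset.sum_congr rfl fun k _ => ?_)
    have e2 : vJ - 2*(k:ℂ)*η = v - 2*((J + k : ℕ) : ℂ)*η := by
      rw [hvJ]; push_cast; ring
    have e3 : vJ - 2*((k:ℂ)+1)*η = v - 2*(((J + k : ℕ) : ℂ)+1)*η := by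
      rw [hvJ]; push_cast; ring
    rw [hS]; simp only; rw [e2, e3]
  -- (D): the N-th relation at base point vJ
  have hD : (Q vJ : R) * (Q vJ : R) * ∑ k ∈ range N, S (J + k)
      = ((M₀⁻¹ : Rˣ) : R) * (Q (C vJ) : R) * (Q vJ : R) := by
    have h := eightVertex_aux η L N Q htil Tf hfus vJ N le_rfl
    have e1 : vJ - 2*(N:ℂ)*η = vJ - 2*(N:ℂ)*η := rfl
    rw [hQper vJ] at h
    rw [← hQQN vJ, h]
    refine congrArg _ (Finset.sum_congr rfl fun k _ => ?_)
    have e2 : vJ - 2*(k:ℂ)*η = v - 2*((J + k : ℕ) : ℂ)*η := by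
      rw [hvJ]; push_cast; ring
    have e3 : vJ - 2*((k:ℂ)+1)*η = v - 2*(((J + k : ℕ) : ℂ)+1)*η := by
      rw [hvJ]; push_cast; ring
    rw [hS]; simp only; rw [e2, e3]
  -- split the full sum
  have hsplit : ∑ k ∈ range N, S (J + k)
      = (∑ k ∈ range (N - J), S (J + k)) + ∑ k ∈ range J, S k := by
    rw [range_eq_Ico, ← Finset.sum_Ico_consecutive _ (Nat.zero_le (N - J)) (Nat.sub_le N J),
      ← range_eq_Ico]
    congr 1
    rw [Finset.sum_Ico_eq_sum_range]
    have hNJ : N - (N - J) = J := Nat.sub_sub_self hJ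
    rw [hNJ]
    refine Finset.sum_congr rfl fun j _ => ?_
    have : J + (N - J + j) = j + N := by omega
    rw [this, hSper j]
  -- conclude
  rw [hA, hB]
  have hkey : (Q v : R) * (Q vJ : R) * ((∑ k ∈ range (N - J), S (J + k)) + ∑ k ∈ range J, S k)
      = ((M₀⁻¹ : Rˣ) : R) * (Q (C vJ) : R) * (Q v : R) := by
    have hu : ((Q vJ)⁻¹ : Rˣ) * (Q vJ : R) = 1 := Units.inv_mul _
    have h2 : ∑ k ∈ range N, S (J + k)
        = ((Q vJ)⁻¹ : Rˣ) * ((Q vJ)⁻¹ : Rˣ) * (((M₀⁻¹ : Rˣ) : R) * (Q (C vJ) : R) * (Q vJ : R)) := by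
      rw [← hD]
      calc (∑ k ∈ range N, S (J + k))
          = (((Q vJ)⁻¹ : Rˣ) * (Q vJ : R)) * ((((Q vJ)⁻¹ : Rˣ) * (Q vJ : R))) * (∑ k ∈ range N, S (J + k)) := by
            rw [hu]; ring
        _ = ((Q vJ)⁻¹ : Rˣ) * ((Q vJ)⁻¹ : Rˣ) * ((Q vJ : R) * (Q vJ : R) * ∑ k ∈ range N, S (J + k)) := by ring
    rw [← hsplit, h2]
    calc (Q v : R) * (Q vJ : R) * (((Q vJ)⁻¹ : Rˣ) * ((Q vJ)⁻¹ : Rˣ) * (((M₀⁻¹ : Rˣ) : R) * (Q (C vJ) : R) * (Q vJ : R)))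
        = ((((Q vJ)⁻¹ : Rˣ) * (Q vJ : R)) * (((Q vJ)⁻¹ : Rˣ) * (Q vJ : R))) * (((M₀⁻¹ : Rˣ) : R) * (Q (C vJ) : R) * (Q v : R)) := by ring
      _ = ((M₀⁻¹ : Rˣ) : R) * (Q (C vJ) : R) * (Q v : R) := by rw [hu]; ring
  calc (Q v : R) * (Q vJ : R) * (∑ k ∈ range J, S k)
        + (Q vJ : R) * (Q v : R) * ∑ k ∈ range (N - J), S (J + k)
      = (Q v : R) * (Q vJ : R) * ((∑ k ∈ range (N - J), S (J + k)) + ∑ k ∈ range J, S k) := by ring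
    _ = ((M₀⁻¹ : Rˣ) : R) * (Q (C vJ) : R) * (Q v : R) := hkey
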